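/- Suppose t = 0, i.e., m = m1 + m2. If m1 ≤ (1−p)²m2/4 or m2 ≤ (1−p)²m1/4, the game has a unique extreme pure Nash equilibrium with x1* = 0 or x2* = 0, respectively. Otherwise, the unique pure Nash equilibrium is (x1*, x2*) = ( √(m1·m2)·(2√m1 − (1−p)√m2) / ((1+p)(√m1 + √m2)), √(m1·m2)·(2√m2 − (1−p)√m1) / ((1+p)(√m1 + √m2)) ); in this case x1* + x2* = √(m1·m2) ≤ (m1 + m2)/2, with equality if and only if m1 = m2 = m/2. -/

import Mathlib

/-- Average reward of pool 1 in the two-player miner's dilemma with betrayal,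
where the total mining power is `m1 + m2 + t`. -/
noncomputable def r1 (m1 m2 t p x1 x2 : ℝ) : ℝ :=
  (m1*m2 + m1*x1 + p*m2*x2 - (1-p)*x1^2 - (1-p)*x1*x2) /
    (((m1+m2+t) - (1-p)*(x1+x2)) * (m1*m2 + m1*x1 + m2*x2))

/-- Average reward of pool 2. -/
noncomputable def r2 (m1 m2 t p x1 x2 : ℝ) : ℝ :=
  (m1*m2 + m2*x2 + p*m1*x1 - (1-p)*x2^2 - (1-p)*x1*x2) /
    (((m1+m2+t) - (1-p)*(x1+x2)) * (m1*m2 + m1*x1 + m2*x2))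

/-- `(x1, x2)` is a pure Nash equilibrium of the two-player miner's dilemma game. -/
noncomputable def IsNash (m1 m2 t p x1 x2 : ℝ) : Prop :=
  x1 ∈ Set.Icc 0 m1 ∧ x2 ∈ Set.Icc 0 m2 ∧
  (∀ x ∈ Set.Icc (0:ℝ) m1, r1 m1 m2 t p x x2 ≤ r1 m1 m2 t p x1 x2) ∧
  (∀ x ∈ Set.Icc (0:ℝ) m2, r2 m1 m2 t p x1 x ≤ r2 m1 m2 t p x1 x2)

/-! ### Auxiliary machinery -/

/-- The rescaled partial derivative of `r1` with respect to `x1`. -/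
noncomputable def G1e (m1 m2 p x y : ℝ) : ℝ :=
  ((1-p)*y - p*m1)*x^2 - 2*(m1*m2 + m2*y - (1-p)*y^2)*x
    + ((1-p)*y^3 - m2*(1-p)*y^2 - m1*y^2 + m1^2*m2 + m1*m2*(1+p)*y)

lemma r2_swap (m1 m2 p x1 x2 : ℝ) : r2 m1 m2 0 p x1 x2 = r1 m2 m1 0 p x2 x1 := by
  rw [r1, r2]; ring_nf

lemma IsNash_swap (m1 m2 p x1 x2 : ℝ) :
    IsNash m1 m2 0 p x1 x2 ↔ IsNash m2 m1 0 p x2 x1 := by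
  constructor
  · rintro ⟨h1, h2, h3, h4⟩
    refine ⟨h2, h1, fun x hx => ?_, fun x hx => ?_⟩
    · rw [← r2_swap m1 m2 p x1 x, ← r2_swap m1 m2 p x1 x2]; exact h4 x hx
    · rw [r2_swap m2 m1 p x2 x, r2_swap m2 m1 p x2 x1]; exact h3 x hx
  · rintro ⟨h1, h2, h3, h4⟩
    refine ⟨h2, h1, fun x hx => ?_, fun x hx => ?_⟩
    · rw [← r2_swap m2 m1 p x2 x, ← r2_swap m2 m1 p x2 x1]; exact h4 x hx
    · rw [r2_swap m1 m2 p x1 x, r2_swap m1 m2 p x1 x2]; exact h3 x hx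

lemma key_eps (A B ε0 : ℝ) (hε0 : 0 < ε0)
    (h : ∀ ε : ℝ, 0 < ε → ε ≤ ε0 → B*ε ≤ A*ε^2) : B ≤ 0 := by
  by_contra hB
  push_neg at hB
  have hA : 0 < A := by
    have := h ε0 hε0 le_rfl
    nlinarith
  set ε := min ε0 (B/(2*A)) with hεdef
  have hε : 0 < ε := lt_min hε0 (by positivity)
  have h2 := h ε hε (min_le_left _ _)
  have h3 : A * ε ≤ B/2 := by
    have h4 : ε ≤ B/(2*A) := min_le_right _ _
    have h5 : A * (B/(2*A)) = B/2 := by field_simp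
    nlinarith
  nlinarith [mul_pos hB hε, mul_le_mul_of_nonneg_right h3 hε.le]

lemma br_suff (m1 m2 p b y : ℝ) (hm1 : 0 < m1) (hm2 : 0 < m2)
    (hp0 : 0 ≤ p) (hp1 : p < 1) (hb0 : 0 ≤ b) (hbm : b ≤ m1)
    (hy0 : 0 ≤ y) (hym : (1-p)*y < m2)
    (hG : G1e m1 m2 p b y = 0 ∨ (b = 0 ∧ G1e m1 m2 p 0 y ≤ 0)) :
    ∀ x ∈ Set.Icc (0:ℝ) m1, r1 m1 m2 0 p x y ≤ r1 m1 m2 0 p b y := by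
  intro x hx
  obtain ⟨hx0, hxm⟩ := hx
  have hq : 0 < 1 - p := by linarith
  have hFx : 0 < (m1+m2+0) - (1-p)*(x+y) := by nlinarith
  have hFb : 0 < (m1+m2+0) - (1-p)*(b+y) := by nlinarith
  have hKx : 0 < m1*m2 + m1*x + m2*y := by positivity
  have hKb : 0 < m1*m2 + m1*b + m2*y := by positivity
  rw [r1, r1, div_le_div_iff₀ (mul_pos hFx hKx) (mul_pos hFb hKb)]
  have hA : 0 ≤ (1-p)*m2*((m1*m2 + m2*y - (1-p)*y^2) + b*(p*m1 - (1-p)*y)) := by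
    have h1 : (m1*m2 + m2*y - (1-p)*y^2) + b*(p*m1 - (1-p)*y)
        = (m2 - (1-p)*y)*(m1+y) + (1-p)*y*(m1-b) + p*m1*b := by ring
    rw [h1]
    have t1 : (0:ℝ) ≤ (m2 - (1-p)*y)*(m1+y) :=
      mul_nonneg (by linarith) (by linarith)
    have t2 : (0:ℝ) ≤ (1-p)*y*(m1-b) := by
      apply mul_nonneg (mul_nonneg hq.le hy0); linarith
    have t3 : (0:ℝ) ≤ p*m1*b := by positivity
    have := mul_nonneg (mul_nonneg hq.le hm2.le)
      (by linarith : (0:ℝ) ≤ (m2 - (1-p)*y)*(m1+y) + (1-p)*y*(m1-b) + p*m1*b)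
    linarith
  have key : (m1*m2 + m1*b + p*m2*y - (1-p)*b^2 - (1-p)*b*y) *
        (((m1+m2+0) - (1-p)*(x+y)) * (m1*m2 + m1*x + m2*y))
      - (m1*m2 + m1*x + p*m2*y - (1-p)*x^2 - (1-p)*x*y) *
        (((m1+m2+0) - (1-p)*(b+y)) * (m1*m2 + m1*b + m2*y))
      = ((1-p)*m2*((m1*m2 + m2*y - (1-p)*y^2) + b*(p*m1 - (1-p)*y))) * (x-b)^2
        - (1-p)*m2*(G1e m1 m2 p b y)*(x-b) := by
    simp only [G1e]; ring
  rcases hG with hG | ⟨hb, hG⟩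
  · have hz : (1-p)*m2*(G1e m1 m2 p b y)*(x-b) = 0 := by rw [hG]; ring
    linarith [key, hz, mul_nonneg hA (sq_nonneg (x-b))]
  · subst hb
    have h2 : 0 ≤ -((1-p)*m2*(G1e m1 m2 p 0 y)*(x-0)) := by
      have h3 : (0:ℝ) ≤ (1-p)*m2*(-(G1e m1 m2 p 0 y))*(x-0) := by
        apply mul_nonneg (mul_nonneg (mul_nonneg hq.le hm2.le) (by linarith)) (by linarith)
      linarith [h3, (by ring : (1-p)*m2*(-(G1e m1 m2 p 0 y))*(x-0) = -((1-p)*m2*(G1e m1 m2 p 0 y)*(x-0)))]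
    linarith [key, h2, mul_nonneg hA (sq_nonneg (x-0))]

lemma br_nec (m1 m2 p b y : ℝ) (hm1 : 0 < m1) (hm2 : 0 < m2)
    (hp0 : 0 ≤ p) (hp1 : p < 1) (hb0 : 0 ≤ b) (hbm : b ≤ m1)
    (hy0 : 0 ≤ y) (hym : y ≤ m2) (hF : 0 < (m1+m2) - (1-p)*(b+y))
    (hbr : ∀ x ∈ Set.Icc (0:ℝ) m1, r1 m1 m2 0 p x y ≤ r1 m1 m2 0 p b y) :
    (0 < b → 0 ≤ G1e m1 m2 p b y) ∧ (b < m1 → G1e m1 m2 p b y ≤ 0) := by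
  have hq : 0 < 1 - p := by linarith
  have hKb : 0 < m1*m2 + m1*b + m2*y := by positivity
  have hFb : 0 < (m1+m2+0) - (1-p)*(b+y) := by linarith
  set A := (1-p)*m2*((m1*m2 + m2*y - (1-p)*y^2) + b*(p*m1 - (1-p)*y)) with hAdef
  have main : ∀ x, 0 ≤ x → x ≤ m1 → 0 < (m1+m2+0) - (1-p)*(x+y) →
      (1-p)*m2*(G1e m1 m2 p b y)*(x-b) ≤ A*(x-b)^2 := by
    intro x hx0 hxm hFx
    have hKx : 0 < m1*m2 + m1*x + m2*y := by positivity
    have h := hbr x ⟨hx0, hxm⟩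
    rw [r1, r1, div_le_div_iff₀ (mul_pos hFx hKx) (mul_pos hFb hKb)] at h
    have key : (m1*m2 + m1*b + p*m2*y - (1-p)*b^2 - (1-p)*b*y) *
          (((m1+m2+0) - (1-p)*(x+y)) * (m1*m2 + m1*x + m2*y))
        - (m1*m2 + m1*x + p*m2*y - (1-p)*x^2 - (1-p)*x*y) *
          (((m1+m2+0) - (1-p)*(b+y)) * (m1*m2 + m1*b + m2*y))
        = A * (x-b)^2 - (1-p)*m2*(G1e m1 m2 p b y)*(x-b) := by
      simp only [hAdef, G1e]; ring
    linarith [key, h]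
  constructor
  · intro hbpos
    have h := key_eps A (-((1-p)*m2*(G1e m1 m2 p b y))) b hbpos ?_
    · nlinarith [mul_pos hq hm2]
    · intro ε hε hεb
      have h2 := main (b-ε) (by linarith) (by linarith) (by nlinarith)
      calc -((1-p)*m2*(G1e m1 m2 p b y))*ε
          = (1-p)*m2*(G1e m1 m2 p b y)*((b-ε)-b) := by ring
        _ ≤ A*((b-ε)-b)^2 := h2
        _ = A*ε^2 := by ring
  · intro hblt
    set ε0 := min (m1-b) (((m1+m2) - (1-p)*(b+y))/(2*(1-p))) with hε0def
    have hε0 : 0 < ε0 := lt_min (by linarith) (by positivity)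
    have h := key_eps A ((1-p)*m2*(G1e m1 m2 p b y)) ε0 hε0 ?_
    · nlinarith [mul_pos hq hm2]
    · intro ε hε hεb
      have hεa : ε ≤ m1 - b := le_trans hεb (min_le_left _ _)
      have hεc : ε ≤ ((m1+m2) - (1-p)*(b+y))/(2*(1-p)) := le_trans hεb (min_le_right _ _)
      have hεc' : (1-p)*ε ≤ ((m1+m2) - (1-p)*(b+y))/2 := by
        rw [le_div_iff₀ (by positivity : (0:ℝ) < 2*(1-p))] at hεc
        nlinarith
      have h2 := main (b+ε) (by linarith) (by linarith) (by nlinarith)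
      calc (1-p)*m2*(G1e m1 m2 p b y)*ε
          = (1-p)*m2*(G1e m1 m2 p b y)*((b+ε)-b) := by ring
        _ ≤ A*((b+ε)-b)^2 := h2
        _ = A*ε^2 := by ring

lemma E1_neg (m1 m2 p y : ℝ) (hm1 : 0 < m1) (hm2 : 0 < m2)
    (hp0 : 0 ≤ p) (hp1 : p < 1) (hy0 : 0 ≤ y) (hym : y ≤ m2)
    (hF : 0 < (m1+m2) - (1-p)*(m1+y)) : G1e m1 m2 p m1 y < 0 := by
  have hq : 0 < 1 - p := by linarith
  have hR : 0 < m2 - (1-p)*y := by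
    rcases eq_or_lt_of_le hp0 with h | h
    · subst h; linarith
    · rcases eq_or_lt_of_le hy0 with h2 | h2
      · subst h2; linarith
      · nlinarith [mul_pos h h2]
  have hpy : p*y ≤ m2 - (1-p)*y := by linarith
  have key : G1e m1 m2 p m1 y
      = -((m2-(1-p)*y)*((1-p)*m1*y+m1^2) + (1-p)*y^2*((m2-(1-p)*y) - p*y)
          + m1*p^2*y^2 + p*m1^3) := by
    simp only [G1e]; ring
  rw [key]
  have t1 : 0 < (m2-(1-p)*y)*((1-p)*m1*y+m1^2) := by
    apply mul_pos hR; nlinarith [mul_nonneg (mul_nonneg hq.le hm1.le) hy0]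
  have t2 : 0 ≤ (1-p)*y^2*((m2-(1-p)*y) - p*y) := by
    apply mul_nonneg (by positivity); linarith
  have t3 : (0:ℝ) ≤ m1*p^2*y^2 := by positivity
  have t4 : (0:ℝ) ≤ p*m1^3 := by positivity
  linarith

lemma S2_pos (m1 m2 p x : ℝ) (hm1 : 0 < m1) (hm2 : 0 < m2)
    (hp0 : 0 ≤ p) (hp1 : p < 1) (hx0 : 0 ≤ x) (hxm : x ≤ m1)
    (hreg : 4*m1 ≤ (1-p)^2*m2) : 0 < G1e m2 m1 p 0 x := by
  have hq : 0 < 1 - p := by linarith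
  have h1 : m1 ≤ m2/4 := by
    nlinarith [mul_nonneg (mul_nonneg hp0 (by linarith : (0:ℝ) ≤ 2-p)) hm2.le]
  have key : G1e m2 m1 p 0 x = (1-p)*x^3 - m1*(1-p)*x^2 - m2*x^2 + m2^2*m1 + m2*m1*(1+p)*x := by
    rw [G1e]; ring
  rw [key]
  nlinarith [mul_nonneg hq.le (pow_nonneg hx0 3),
    mul_nonneg (mul_nonneg (by positivity : (0:ℝ) ≤ m1*(1-p)+m2) hx0) (sub_nonneg.2 hxm),
    mul_nonneg (mul_nonneg (mul_nonneg hp0 hm2.le) hm1.le) hx0,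
    mul_nonneg (mul_nonneg hm1.le hm1.le) (sub_nonneg.2 hxm),
    mul_nonneg (mul_nonneg (by linarith : (0:ℝ) ≤ m2/4 - m1) (by linarith : (0:ℝ) ≤ m2/4 + m1)) hm1.le,
    mul_pos (mul_pos hm1 hm2) hm2]

lemma L3 (m1 m2 p y1 y2 : ℝ) (hm1 : 0 < m1) (hm2 : 0 < m2)
    (hp0 : 0 ≤ p) (hp1 : p < 1) (hreg : 4*m1 ≤ (1-p)^2*m2)
    (hy10 : 0 < y1) (hy1m : y1 ≤ m1) (hy20 : 0 < y2) (hy2m : y2 ≤ m2)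
    (hG1 : G1e m1 m2 p y1 y2 = 0) (hs : (y1+y2)^2 = m1*m2) : False := by
  have hq : 0 < 1 - p := by linarith
  have h2s : 2*(y1+y2) ≤ (1-p)*m2 := by
    nlinarith [sq_nonneg ((1-p)*m2 - 2*(y1+y2))]
  have hQ : (1+p)*(m2-m1)*y1^2 + 2*(m1*(y1+y2) - 2*m1*m2 - p*m2*(y1+y2))*y1
      + m1*m2*(2*(y1+y2)-(1-p)*m2) = 0 := by
    simp only [G1e] at hG1
    linear_combination hG1 - ((1-p)*(y2-m2) - m1)*hs
  have hm12 : m1 ≤ m2 := by nlinarith [sq_nonneg (1-p)]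
  nlinarith [mul_nonneg (mul_nonneg (mul_nonneg (by linarith : (0:ℝ) ≤ 1+p)
      (by linarith : (0:ℝ) ≤ m2 - m1)) hy10.le) (by linarith : (0:ℝ) ≤ m1 - y1),
    mul_nonneg (mul_nonneg hm1.le hy10.le) (by linarith : (0:ℝ) ≤ (1-p)*m2 - 2*(y1+y2)),
    mul_nonneg (mul_nonneg (mul_nonneg hp0 hm2.le) (by linarith : (0:ℝ) ≤ y1+y2)) hy10.le,
    mul_nonneg (mul_nonneg hm1.le hm2.le) (by linarith : (0:ℝ) ≤ (1-p)*m2 - 2*(y1+y2)),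
    mul_nonneg (mul_nonneg (mul_nonneg hm1.le hy10.le) hm2.le) hp0,
    mul_nonneg (mul_nonneg (mul_nonneg hm1.le hy10.le) hm1.le) (by linarith : (0:ℝ) ≤ 1+p),
    mul_pos (mul_pos hm1 hm2) hy10]

lemma L4 (m1 m2 p y : ℝ) (hm1 : 0 < m1) (hm2 : 0 < m2) (hp0 : 0 ≤ p) (hp1 : p < 1)
    (hy0 : 0 < y) (hcon : p*y^2 + 2*m1*y = m1*m2) (hreg : 4*m1 ≤ (1-p)^2*m2) :
    G1e m1 m2 p 0 y ≤ 0 := by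
  have hq : 0 < 1 - p := by linarith
  have hΓ : 0 ≤ (1-p)^2*m1*m2 - 4*m1^2 := by nlinarith
  have hprod : (1-p)^2*m1*m2 - 4*m1^2 = -((2*m1-(1-p)*y)*(2*m1+p*(1-p)*y)) := by
    linear_combination (-(1-p)^2) * hcon
  have h2a : 2*m1 - (1-p)*y ≤ 0 := by
    nlinarith [mul_nonneg (mul_nonneg hp0 hq.le) hy0.le]
  have hB : 4*m1*((1+p^2)*y^2 + ((1+3*p)*m1 - (1-p)*m2)*y + 2*m1^2)
      = -(2*m1+(p^2+p+2)*y)*((1-p)^2*m1*m2 - 4*m1^2)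
        + p*(1+p)*(p^2-p+2)*(2*m1-(1-p)*y)*y^2 := by
    linear_combination ((1-p)*(1+p)*(p^2-p+2)*y - 2*m1*(1-p)^2) * hcon
  have hBle : (1+p^2)*y^2 + ((1+3*p)*m1 - (1-p)*m2)*y + 2*m1^2 ≤ 0 := by
    have t1 : 0 ≤ (2*m1+(p^2+p+2)*y)*((1-p)^2*m1*m2 - 4*m1^2) := by
      apply mul_nonneg _ hΓ; positivity
    have hppos : (0:ℝ) ≤ p*(1+p)*(p^2-p+2) :=
      mul_nonneg (mul_nonneg hp0 (by linarith)) (by nlinarith [sq_nonneg p])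
    have t2 : p*(1+p)*(p^2-p+2)*(2*m1-(1-p)*y)*y^2 ≤ 0 := by
      have := mul_nonneg (mul_nonneg hppos (by linarith : (0:ℝ) ≤ (1-p)*y - 2*m1)) (sq_nonneg y)
      nlinarith
    have h4 : 4*m1*((1+p^2)*y^2 + ((1+3*p)*m1 - (1-p)*m2)*y + 2*m1^2) ≤ 0 := by linarith
    by_contra hc
    push_neg at hc
    nlinarith [mul_pos (show (0:ℝ) < 4*m1 by linarith) hc]
  have hS1 : G1e m1 m2 p 0 y = y*((1+p^2)*y^2 + ((1+3*p)*m1 - (1-p)*m2)*y + 2*m1^2) := by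
    simp only [G1e]
    linear_combination -(m1+y+p*y) * hcon
  rw [hS1]
  exact mul_nonpos_iff.2 (Or.inl ⟨hy0.le, hBle⟩)

lemma L5 (m1 m2 p y : ℝ) (hm1 : 0 < m1) (hm2 : 0 < m2) (hp0 : 0 ≤ p) (hp1 : p < 1)
    (hy0 : 0 < y) (hcon : p*y^2 + 2*m1*y = m1*m2) (hreg : (1-p)^2*m2 < 4*m1) :
    0 < G1e m1 m2 p 0 y := by
  have hq : 0 < 1 - p := by linarith
  have hΓ : (1-p)^2*m1*m2 - 4*m1^2 < 0 := by nlinarith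
  have hprod : (1-p)^2*m1*m2 - 4*m1^2 = -((2*m1-(1-p)*y)*(2*m1+p*(1-p)*y)) := by
    linear_combination (-(1-p)^2) * hcon
  have h2a : 0 < 2*m1 - (1-p)*y := by
    nlinarith [mul_nonneg (mul_nonneg hp0 hq.le) hy0.le]
  have hB : 4*m1*((1+p^2)*y^2 + ((1+3*p)*m1 - (1-p)*m2)*y + 2*m1^2)
      = -(2*m1+(p^2+p+2)*y)*((1-p)^2*m1*m2 - 4*m1^2)
        + p*(1+p)*(p^2-p+2)*(2*m1-(1-p)*y)*y^2 := by
    linear_combination ((1-p)*(1+p)*(p^2-p+2)*y - 2*m1*(1-p)^2) * hcon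
  have hBpos : 0 < (1+p^2)*y^2 + ((1+3*p)*m1 - (1-p)*m2)*y + 2*m1^2 := by
    have t1 : 0 < -(2*m1+(p^2+p+2)*y)*((1-p)^2*m1*m2 - 4*m1^2) := by
      rw [neg_mul]
      apply neg_pos.2
      apply mul_neg_of_pos_of_neg _ hΓ
      positivity
    have hppos : (0:ℝ) ≤ p*(1+p)*(p^2-p+2) :=
      mul_nonneg (mul_nonneg hp0 (by linarith)) (by nlinarith [sq_nonneg p])
    have t2 : 0 ≤ p*(1+p)*(p^2-p+2)*(2*m1-(1-p)*y)*y^2 :=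
      mul_nonneg (mul_nonneg hppos h2a.le) (sq_nonneg y)
    have h4 : 0 < 4*m1*((1+p^2)*y^2 + ((1+3*p)*m1 - (1-p)*m2)*y + 2*m1^2) := by linarith
    nlinarith [h4]
  have hS1 : G1e m1 m2 p 0 y = y*((1+p^2)*y^2 + ((1+3*p)*m1 - (1-p)*m2)*y + 2*m1^2) := by
    simp only [G1e]
    linear_combination -(m1+y+p*y) * hcon
  rw [hS1]
  exact mul_pos hy0 hBpos

lemma hat_unique (m1 p y z : ℝ) (hm1 : 0 < m1) (hp0 : 0 ≤ p)
    (hy : 0 ≤ y) (hz : 0 ≤ z)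
    (h1 : p*y^2 + 2*m1*y = p*z^2 + 2*m1*z) : y = z := by
  have h : (y - z)*(p*(y+z) + 2*m1) = 0 := by linear_combination h1
  rcases mul_eq_zero.1 h with h | h
  · linarith
  · nlinarith [mul_nonneg hp0 (add_nonneg hy hz)]

lemma interior_unique (a b p y1 y2 : ℝ) (ha : 0 < a) (hb : 0 < b)
    (hp0 : 0 ≤ p) (hp1 : p < 1) (hy10 : 0 ≤ y1) (hy1m : y1 ≤ a^2)
    (hsum : y1 + y2 = a*b) (hG1 : G1e (a^2) (b^2) p y1 y2 = 0) :
    ((1+p)*(a+b))*y1 = a*b*(2*a-(1-p)*b) := by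
  have hy2 : y2 = a*b - y1 := by linarith
  subst hy2
  simp only [G1e] at hG1
  have hfac : (((1+p)*(a+b))*y1 - a*b*(2*a-(1-p)*b)) *
      ((1+p)^2*(a+b)^2*((b-a)*y1 - a*b^2)) = 0 := by
    linear_combination ((1+p)*(a+b))^2 * hG1
  have hW : (1+p)^2*(a+b)^2*((b-a)*y1 - a*b^2) < 0 := by
    have h1 : (b-a)*y1 - a*b^2 < 0 := by
      rcases le_or_gt a b with h | h
      · nlinarith [mul_nonneg (sub_nonneg.2 h) (sub_nonneg.2 hy1m),
          mul_nonneg ha.le (sq_nonneg (a-b)), mul_pos (mul_pos ha ha) hb]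
      · nlinarith [mul_nonneg hy10 (by linarith : (0:ℝ) ≤ a - b),
          mul_pos (mul_pos ha hb) hb]
    have h2 : 0 < (1+p)^2*(a+b)^2 := by positivity
    nlinarith
  rcases mul_eq_zero.1 hfac with h | h
  · linarith
  · exact absurd h (ne_of_lt hW)

lemma cand_G1 (a b p : ℝ) (ha : 0 < a) (hb : 0 < b) (hp0 : 0 ≤ p) (hp1 : p < 1) :
    G1e (a^2) (b^2) p (a*b*(2*a-(1-p)*b)/((1+p)*(a+b))) (a*b*(2*b-(1-p)*a)/((1+p)*(a+b))) = 0 := by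
  have hd : ((1+p)*(a+b)) ≠ 0 := by positivity
  rw [G1e]
  field_simp
  ring

lemma cand_lt (a b p : ℝ) (ha : 0 < a) (hb : 0 < b) (hp0 : 0 ≤ p) (hp1 : p < 1) :
    a*b*(2*a-(1-p)*b)/((1+p)*(a+b)) < a^2 := by
  rw [div_lt_iff₀ (by positivity)]
  have hkey : 0 < (1+p)*a^2 - (1-p)*a*b + (1-p)*b^2 := by
    nlinarith [sq_nonneg (2*(1+p)*a - (1-p)*b),
      mul_pos (mul_pos (show (0:ℝ) < 1-p by linarith) (show (0:ℝ) < 3+5*p by linarith))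
        (mul_pos hb hb)]
  nlinarith [mul_pos ha hkey]

/-- Classification of Nash equilibria via KKT conditions. -/
lemma nash_classify (m1 m2 p y1 y2 : ℝ) (hm1 : 0 < m1) (hm2 : 0 < m2)
    (hp0 : 0 ≤ p) (hp1 : p < 1) (hN : IsNash m1 m2 0 p y1 y2) :
    0 ≤ y1 ∧ y1 < m1 ∧ 0 ≤ y2 ∧ y2 < m2 ∧
    G1e m1 m2 p y1 y2 ≤ 0 ∧ G1e m2 m1 p y2 y1 ≤ 0 ∧
    (0 < y1 → G1e m1 m2 p y1 y2 = 0) ∧ (0 < y2 → G1e m2 m1 p y2 y1 = 0) := by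
  obtain ⟨⟨hy10, hy1m⟩, ⟨hy20, hy2m⟩, hbr1, hbr2⟩ := hN
  have hbr2' : ∀ x ∈ Set.Icc (0:ℝ) m2, r1 m2 m1 0 p x y1 ≤ r1 m2 m1 0 p y2 y1 := by
    intro x hx
    rw [← r2_swap m1 m2 p y1 x, ← r2_swap m1 m2 p y1 y2]
    exact hbr2 x hx
  have hq : 0 < 1 - p := by linarith
  have hp1y : (1-p)*y1 ≤ m1 := by nlinarith [mul_nonneg hp0 hy10]
  have hp2y : (1-p)*y2 ≤ m2 := by nlinarith [mul_nonneg hp0 hy20]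
  have hF : 0 < (m1+m2) - (1-p)*(y1+y2) := by
    by_contra hFc
    push_neg at hFc
    have he1 : (1-p)*y1 = m1 := by linarith
    have he2 : (1-p)*y2 = m2 := by linarith
    have hy1e : y1 = m1 := by nlinarith [mul_nonneg hp0 hy10]
    have hy2e : y2 = m2 := by nlinarith [mul_nonneg hp0 hy20]
    have hpz : p = 0 := by
      rcases eq_or_lt_of_le hp0 with h | h
      · exact h.symm
      · nlinarith
    have h0 := hbr1 0 ⟨le_refl 0, hm1.le⟩
    have hrhs : r1 m1 m2 0 p y1 y2 = 0 := by
      rw [r1, show (m1+m2+0) - (1-p)*(y1+y2) = 0 by linarith]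
      simp
    have hlhs : 0 < r1 m1 m2 0 p 0 y2 := by
      rw [r1]
      apply div_pos
      · nlinarith [mul_nonneg (mul_nonneg hp0 hm2.le) hy20]
      · apply mul_pos
        · nlinarith
        · nlinarith [mul_pos hm1 hm2, mul_nonneg hm2.le hy20]
    rw [hrhs] at h0
    linarith
  have hF2 : 0 < (m2+m1) - (1-p)*(y2+y1) := by linarith
  have hlt1 : y1 < m1 := by
    rcases lt_or_eq_of_le hy1m with h | h
    · exact h
    · exfalso
      have hE := E1_neg m1 m2 p y2 hm1 hm2 hp0 hp1 hy20 hy2m (by rw [← h] at hF ⊢; linarith)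
      have hnec := (br_nec m1 m2 p y1 y2 hm1 hm2 hp0 hp1 hy10 hy1m hy20 hy2m hF hbr1).1
        (by rw [h]; exact hm1)
      rw [h] at hnec
      linarith
  have hlt2 : y2 < m2 := by
    rcases lt_or_eq_of_le hy2m with h | h
    · exact h
    · exfalso
      have hE := E1_neg m2 m1 p y1 hm2 hm1 hp0 hp1 hy10 hy1m (by rw [← h] at hF2 ⊢; linarith)
      have hnec := (br_nec m2 m1 p y2 y1 hm2 hm1 hp0 hp1 hy20 hy2m hy10 hy1m hF2 hbr2').1
        (by rw [h]; exact hm2)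
      rw [h] at hnec
      linarith
  have hnec1 := br_nec m1 m2 p y1 y2 hm1 hm2 hp0 hp1 hy10 hy1m hy20 hy2m hF hbr1
  have hnec2 := br_nec m2 m1 p y2 y1 hm2 hm1 hp0 hp1 hy20 hy2m hy10 hy1m hF2 hbr2'
  exact ⟨hy10, hlt1, hy20, hlt2, hnec1.2 hlt1, hnec2.2 hlt2,
    fun h => le_antisymm (hnec1.2 hlt1) (hnec1.1 h),
    fun h => le_antisymm (hnec2.2 hlt2) (hnec2.1 h)⟩

set_option maxHeartbeats 2000000 in
/-- Regime A: pool 1 too small to attack; unique equilibrium `(0, ŷ)`. -/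
lemma regimeA (m1 m2 p : ℝ) (hm1 : 0 < m1) (hm2 : 0 < m2)
    (hp0 : 0 ≤ p) (hp1 : p < 1) (hreg : 4*m1 ≤ (1-p)^2*m2) :
    IsNash m1 m2 0 p 0 (m1*m2/(m1 + Real.sqrt (m1^2 + p*m1*m2))) ∧
    ∀ y1 y2 : ℝ, IsNash m1 m2 0 p y1 y2 →
      y1 = 0 ∧ y2 = m1*m2/(m1 + Real.sqrt (m1^2 + p*m1*m2)) := by
  have hq : 0 < 1 - p := by linarith
  set R := Real.sqrt (m1^2 + p*m1*m2) with hRdef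
  have hR2 : R^2 = m1^2 + p*m1*m2 := Real.sq_sqrt (by positivity)
  have hR0 : 0 < R := Real.sqrt_pos.2 (by positivity)
  set yh := m1*m2/(m1 + R) with hyhdef
  have hyh0 : 0 < yh := by positivity
  have hcon : p*yh^2 + 2*m1*yh = m1*m2 := by
    rw [hyhdef]
    field_simp
    linear_combination (-1) * hR2
  have hyhlt : yh < m2 := by
    rw [hyhdef, div_lt_iff₀ (by positivity)]
    nlinarith [mul_pos hm2 hR0]
  have hG2 : G1e m2 m1 p yh 0 = 0 := by
    simp only [G1e]
    linear_combination (-m2) * hcon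
  have hS1 : G1e m1 m2 p 0 yh ≤ 0 := L4 m1 m2 p yh hm1 hm2 hp0 hp1 hyh0 hcon hreg
  constructor
  · refine ⟨⟨le_refl 0, hm1.le⟩, ⟨hyh0.le, hyhlt.le⟩, ?_, ?_⟩
    · exact br_suff m1 m2 p 0 yh hm1 hm2 hp0 hp1 le_rfl hm1.le hyh0.le
        (by nlinarith [mul_nonneg hp0 hyh0.le]) (Or.inr ⟨rfl, hS1⟩)
    · intro x hx
      rw [r2_swap, r2_swap]
      exact br_suff m2 m1 p yh 0 hm2 hm1 hp0 hp1 hyh0.le (by linarith) le_rfl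
        (by nlinarith) (Or.inl hG2) x hx
  · intro y1 y2 hN
    obtain ⟨hy10, hlt1, hy20, hlt2, hle1, hle2, heq1, heq2⟩ :=
      nash_classify m1 m2 p y1 y2 hm1 hm2 hp0 hp1 hN
    -- y2 = 0 is impossible
    have hy2pos : 0 < y2 := by
      rcases eq_or_lt_of_le hy20 with h | h
      · exfalso
        have := S2_pos m1 m2 p y1 hm1 hm2 hp0 hp1 hy10 hlt1.le hreg
        rw [← h] at hle2
        linarith
      · exact h
    have hG2y : G1e m2 m1 p y2 y1 = 0 := heq2 hy2pos
    -- y1 must be 0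
    have hy1z : y1 = 0 := by
      rcases eq_or_lt_of_le hy10 with h | h
      · exact h.symm
      · exfalso
        have hG1y : G1e m1 m2 p y1 y2 = 0 := heq1 h
        have hsum : (y1+y2)^2 = m1*m2 := by
          have hid : G1e m1 m2 p y1 y2 + G1e m2 m1 p y2 y1
              = ((1-p)*(y1+y2) - (m1+m2)) * ((y1+y2)^2 - m1*m2) := by
            simp only [G1e]; ring
          rw [hG1y, hG2y] at hid
          have hid0 : ((1-p)*(y1+y2) - (m1+m2)) * ((y1+y2)^2 - m1*m2) = 0 := by
            linarith
          have hne : (1-p)*(y1+y2) - (m1+m2) ≠ 0 := by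
            have : (1-p)*y1 ≤ m1 := by nlinarith [mul_nonneg hp0 hy10]
            have : (1-p)*y2 ≤ m2 := by nlinarith [mul_nonneg hp0 hy20]
            intro hc
            nlinarith
          have := (mul_eq_zero.1 hid0).resolve_left hne
          linarith
        exact L3 m1 m2 p y1 y2 hm1 hm2 hp0 hp1 hreg h hlt1.le hy2pos hlt2.le hG1y hsum
    refine ⟨hy1z, ?_⟩
    rw [hy1z] at hG2y
    have hcony : p*y2^2 + 2*m1*y2 = m1*m2 := by
      simp only [G1e] at hG2y
      have h2 : m2*(m1*m2 - p*y2^2 - 2*m1*y2) = 0 := by linear_combination hG2y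
      rcases mul_eq_zero.1 h2 with h | h
      · exact absurd h hm2.ne'
      · linarith
    exact hat_unique m1 p y2 yh hm1 hp0 hy20 hyh0.le (by rw [hcony, hcon])

set_option maxHeartbeats 2000000 in
/-- Regime C: both pools attack; the interior equilibrium. -/
lemma regimeC (m1 m2 p : ℝ) (hm1 : 0 < m1) (hm2 : 0 < m2)
    (hp0 : 0 ≤ p) (hp1 : p < 1)
    (hreg1 : (1-p)^2*m2 < 4*m1) (hreg2 : (1-p)^2*m1 < 4*m2) :
    IsNash m1 m2 0 p
      (Real.sqrt m1*Real.sqrt m2*(2*Real.sqrt m1-(1-p)*Real.sqrt m2)/((1+p)*(Real.sqrt m1+Real.sqrt m2)))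
      (Real.sqrt m1*Real.sqrt m2*(2*Real.sqrt m2-(1-p)*Real.sqrt m1)/((1+p)*(Real.sqrt m1+Real.sqrt m2))) ∧
    ∀ y1 y2 : ℝ, IsNash m1 m2 0 p y1 y2 →
      y1 = Real.sqrt m1*Real.sqrt m2*(2*Real.sqrt m1-(1-p)*Real.sqrt m2)/((1+p)*(Real.sqrt m1+Real.sqrt m2)) ∧
      y2 = Real.sqrt m1*Real.sqrt m2*(2*Real.sqrt m2-(1-p)*Real.sqrt m1)/((1+p)*(Real.sqrt m1+Real.sqrt m2)) := by
  have hq : 0 < 1 - p := by linarith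
  set a := Real.sqrt m1 with hadef
  set b := Real.sqrt m2 with hbdef
  have ha : 0 < a := Real.sqrt_pos.2 hm1
  have hb : 0 < b := Real.sqrt_pos.2 hm2
  have ha2 : a^2 = m1 := Real.sq_sqrt hm1.le
  have hb2 : b^2 = m2 := Real.sq_sqrt hm2.le
  have hd : (0:ℝ) < (1+p)*(a+b) := by positivity
  set x1s := a*b*(2*a-(1-p)*b)/((1+p)*(a+b)) with hx1def
  set x2s := a*b*(2*b-(1-p)*a)/((1+p)*(a+b)) with hx2def
  have hr1 : 2*a - (1-p)*b > 0 := by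
    nlinarith [Real.sqrt_nonneg m1, Real.sqrt_nonneg m2]
  have hr2 : 2*b - (1-p)*a > 0 := by
    nlinarith [Real.sqrt_nonneg m1, Real.sqrt_nonneg m2]
  have hx1pos : 0 < x1s := by rw [hx1def]; positivity
  have hx2pos : 0 < x2s := by rw [hx2def]; positivity
  have hx1lt : x1s < m1 := by
    rw [hx1def, ← ha2]; exact cand_lt a b p ha hb hp0 hp1
  have hx2lt : x2s < m2 := by
    rw [hx2def, ← hb2]
    have := cand_lt b a p hb ha hp0 hp1
    calc a*b*(2*b-(1-p)*a)/((1+p)*(a+b)) = b*a*(2*b-(1-p)*a)/((1+p)*(b+a)) := by ring_nf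
    _ < b^2 := this
  have hG1c : G1e m1 m2 p x1s x2s = 0 := by
    rw [← ha2, ← hb2, hx1def, hx2def]; exact cand_G1 a b p ha hb hp0 hp1
  have hG2c : G1e m2 m1 p x2s x1s = 0 := by
    rw [← ha2, ← hb2, hx2def, hx1def]
    have := cand_G1 b a p hb ha hp0 hp1
    have e1 : b*a*(2*b-(1-p)*a)/((1+p)*(b+a)) = a*b*(2*b-(1-p)*a)/((1+p)*(a+b)) := by ring_nf
    have e2 : b*a*(2*a-(1-p)*b)/((1+p)*(b+a)) = a*b*(2*a-(1-p)*b)/((1+p)*(a+b)) := by ring_nf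
    rw [e1, e2] at this
    exact this
  have hsum : x1s + x2s = a*b := by
    rw [hx1def, hx2def]
    field_simp
    ring
  constructor
  · refine ⟨⟨hx1pos.le, hx1lt.le⟩, ⟨hx2pos.le, hx2lt.le⟩, ?_, ?_⟩
    · exact br_suff m1 m2 p x1s x2s hm1 hm2 hp0 hp1 hx1pos.le hx1lt.le hx2pos.le
        (by nlinarith [mul_nonneg hp0 hx2pos.le]) (Or.inl hG1c)
    · intro x hx
      rw [r2_swap, r2_swap]
      exact br_suff m2 m1 p x2s x1s hm2 hm1 hp0 hp1 hx2pos.le hx2lt.le hx1pos.le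
        (by nlinarith [mul_nonneg hp0 hx1pos.le]) (Or.inl hG2c) x hx
  · intro y1 y2 hN
    obtain ⟨hy10, hlt1, hy20, hlt2, hle1, hle2, heq1, heq2⟩ :=
      nash_classify m1 m2 p y1 y2 hm1 hm2 hp0 hp1 hN
    -- y1 = 0 impossible
    have hy1pos : 0 < y1 := by
      rcases eq_or_lt_of_le hy10 with h | h
      · exfalso
        -- then y2 > 0 (else G2(0,0) > 0), and G2 = 0 gives constraint, then L5
        have hy2pos : 0 < y2 := by
          rcases eq_or_lt_of_le hy20 with h2 | h2
          · exfalso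
            have hC : G1e m2 m1 p y2 y1 = m2^2*m1 := by
              rw [← h, ← h2, G1e]; ring
            nlinarith [mul_pos (mul_pos hm2 hm2) hm1]
          · exact h2
        have hG2y := heq2 hy2pos
        rw [← h] at hG2y
        have hcony : p*y2^2 + 2*m1*y2 = m1*m2 := by
          simp only [G1e] at hG2y
          have h2 : m2*(m1*m2 - p*y2^2 - 2*m1*y2) = 0 := by linear_combination hG2y
          rcases mul_eq_zero.1 h2 with h3 | h3
          · exact absurd h3 hm2.ne'
          · linarith
        have := L5 m1 m2 p y2 hm1 hm2 hp0 hp1 hy2pos hcony hreg1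
        rw [← h] at hle1
        linarith
      · exact h
    have hy2pos : 0 < y2 := by
      rcases eq_or_lt_of_le hy20 with h | h
      · exfalso
        have hG1y := heq1 hy1pos
        rw [← h] at hG1y
        have hcony : p*y1^2 + 2*m2*y1 = m2*m1 := by
          simp only [G1e] at hG1y
          have h2 : m1*(m1*m2 - p*y1^2 - 2*m2*y1) = 0 := by linear_combination hG1y
          rcases mul_eq_zero.1 h2 with h3 | h3
          · exact absurd h3 hm1.ne'
          · linarith
        have := L5 m2 m1 p y1 hm2 hm1 hp0 hp1 hy1pos hcony hreg2
        rw [← h] at hle2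
        linarith
      · exact h
    have hG1y := heq1 hy1pos
    have hG2y := heq2 hy2pos
    have hsum2 : (y1+y2)^2 = m1*m2 := by
      have hid : G1e m1 m2 p y1 y2 + G1e m2 m1 p y2 y1
          = ((1-p)*(y1+y2) - (m1+m2)) * ((y1+y2)^2 - m1*m2) := by
        simp only [G1e]; ring
      rw [hG1y, hG2y] at hid
      have hid0 : ((1-p)*(y1+y2) - (m1+m2)) * ((y1+y2)^2 - m1*m2) = 0 := by
        linarith
      have hne : (1-p)*(y1+y2) - (m1+m2) ≠ 0 := by
        have h1 : (1-p)*y1 ≤ m1 := by nlinarith [mul_nonneg hp0 hy10]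
        have h2 : (1-p)*y2 ≤ m2 := by nlinarith [mul_nonneg hp0 hy20]
        intro hc; nlinarith
      have := (mul_eq_zero.1 hid0).resolve_left hne
      linarith
    have hsumab : y1 + y2 = a*b := by
      have h1 : (y1+y2)^2 = (a*b)^2 := by rw [hsum2, ← ha2, ← hb2]; ring
      have h2 : (y1+y2-a*b)*(y1+y2+a*b) = 0 := by linear_combination h1
      rcases mul_eq_zero.1 h2 with h | h
      · linarith
      · nlinarith [mul_pos ha hb]
    have hu1 := interior_unique a b p y1 y2 ha hb hp0 hp1 hy10 (by rw [ha2]; exact hlt1.le)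
      hsumab (by rw [ha2, hb2]; exact hG1y)
    have hu2 := interior_unique b a p y2 y1 hb ha hp0 hp1 hy20 (by rw [hb2]; exact hlt2.le)
      (by rw [mul_comm b a]; linarith [hsumab]) (by rw [ha2, hb2]; exact hG2y)
    constructor
    · rw [hx1def, eq_div_iff hd.ne']
      linarith [hu1]
    · rw [hx2def, eq_div_iff hd.ne']
      have : ((1+p)*(b+a))*y2 = b*a*(2*b-(1-p)*a) := hu2
      nlinarith [this]

set_option maxHeartbeats 2000000 in
/-- Binary case `t = 0` (`m = m1 + m2`): characterization of the unique
pure Nash equilibrium. -/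
theorem stmt10 (m1 m2 p : ℝ) (hm1 : 0 < m1) (hm2 : 0 < m2)
    (hp0 : 0 ≤ p) (hp1 : p < 1) :
    (m1 ≤ (1-p)^2*m2/4 →
      (∃! q : ℝ × ℝ, IsNash m1 m2 0 p q.1 q.2) ∧
      (∀ y1 y2 : ℝ, IsNash m1 m2 0 p y1 y2 → y1 = 0)) ∧
    (m2 ≤ (1-p)^2*m1/4 →
      (∃! q : ℝ × ℝ, IsNash m1 m2 0 p q.1 q.2) ∧
      (∀ y1 y2 : ℝ, IsNash m1 m2 0 p y1 y2 → y2 = 0)) ∧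
    (¬ m1 ≤ (1-p)^2*m2/4 → ¬ m2 ≤ (1-p)^2*m1/4 →
      let x1s : ℝ := Real.sqrt (m1*m2) * (2*Real.sqrt m1 - (1-p)*Real.sqrt m2) /
        ((1+p)*(Real.sqrt m1 + Real.sqrt m2))
      let x2s : ℝ := Real.sqrt (m1*m2) * (2*Real.sqrt m2 - (1-p)*Real.sqrt m1) /
        ((1+p)*(Real.sqrt m1 + Real.sqrt m2))
      IsNash m1 m2 0 p x1s x2s ∧
      (∀ y1 y2 : ℝ, IsNash m1 m2 0 p y1 y2 → y1 = x1s ∧ y2 = x2s) ∧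
      x1s + x2s = Real.sqrt (m1*m2) ∧
      x1s + x2s ≤ (m1 + m2)/2 ∧
      (x1s + x2s = (m1 + m2)/2 ↔ m1 = m2)) := by
  have hsqrtmul : Real.sqrt (m1*m2) = Real.sqrt m1 * Real.sqrt m2 := Real.sqrt_mul hm1.le m2
  refine ⟨?_, ?_, ?_⟩
  · intro hreg
    have hreg' : 4*m1 ≤ (1-p)^2*m2 := by linarith
    obtain ⟨hex, huniq⟩ := regimeA m1 m2 p hm1 hm2 hp0 hp1 hreg'
    refine ⟨⟨(0, m1*m2/(m1 + Real.sqrt (m1^2 + p*m1*m2))), hex, ?_⟩,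
      fun y1 y2 hN => (huniq y1 y2 hN).1⟩
    rintro ⟨z1, z2⟩ hz
    obtain ⟨h1, h2⟩ := huniq z1 z2 hz
    simp only [Prod.mk.injEq]
    exact ⟨h1, h2⟩
  · intro hreg
    have hreg' : 4*m2 ≤ (1-p)^2*m1 := by linarith
    obtain ⟨hex, huniq⟩ := regimeA m2 m1 p hm2 hm1 hp0 hp1 hreg'
    have hex' : IsNash m1 m2 0 p (m2*m1/(m2 + Real.sqrt (m2^2 + p*m2*m1))) 0 :=
      (IsNash_swap m1 m2 p _ _).2 hex
    refine ⟨⟨(m2*m1/(m2 + Real.sqrt (m2^2 + p*m2*m1)), 0), hex', ?_⟩,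
      fun y1 y2 hN => (huniq y2 y1 ((IsNash_swap m1 m2 p y1 y2).1 hN)).1⟩
    rintro ⟨z1, z2⟩ hz
    obtain ⟨h1, h2⟩ := huniq z2 z1 ((IsNash_swap m1 m2 p z1 z2).1 hz)
    simp only [Prod.mk.injEq]
    exact ⟨h2, h1⟩
  · intro hreg1 hreg2
    push_neg at hreg1 hreg2
    have hreg1' : (1-p)^2*m2 < 4*m1 := by linarith
    have hreg2' : (1-p)^2*m1 < 4*m2 := by linarith
    have ha : 0 < Real.sqrt m1 := Real.sqrt_pos.2 hm1
    have hb : 0 < Real.sqrt m2 := Real.sqrt_pos.2 hm2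
    have ha2 : Real.sqrt m1^2 = m1 := Real.sq_sqrt hm1.le
    have hb2 : Real.sqrt m2^2 = m2 := Real.sq_sqrt hm2.le
    obtain ⟨hex, huniq⟩ := regimeC m1 m2 p hm1 hm2 hp0 hp1 hreg1' hreg2'
    rw [← hsqrtmul] at hex huniq
    have hsum : Real.sqrt (m1*m2) * (2*Real.sqrt m1 - (1-p)*Real.sqrt m2) /
          ((1+p)*(Real.sqrt m1 + Real.sqrt m2))
        + Real.sqrt (m1*m2) * (2*Real.sqrt m2 - (1-p)*Real.sqrt m1) /
          ((1+p)*(Real.sqrt m1 + Real.sqrt m2)) = Real.sqrt (m1*m2) := by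
      rw [hsqrtmul]
      field_simp
      ring
    have hle : Real.sqrt (m1*m2) ≤ (m1+m2)/2 := by
      rw [hsqrtmul]
      nlinarith [sq_nonneg (Real.sqrt m1 - Real.sqrt m2)]
    have hiff : Real.sqrt (m1*m2) = (m1+m2)/2 ↔ m1 = m2 := by
      rw [hsqrtmul]
      constructor
      · intro h
        have h3 : (Real.sqrt m1 - Real.sqrt m2)^2 = 0 := by
          linear_combination ha2 + hb2 - 2*h
        have h4 : Real.sqrt m1 - Real.sqrt m2 = 0 :=
          pow_eq_zero_iff (n := 2) (by norm_num) |>.1 h3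
        rw [← ha2, ← hb2, show Real.sqrt m1 = Real.sqrt m2 by linarith]
      · intro h
        subst h
        linear_combination ha2
    refine ⟨hex, huniq, hsum, ?_, ?_⟩
    · rw [hsum]; exact hle
    · rw [hsum]; exact hiff
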